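/- Let K be a field and G a subgroup of the multiplicative group K^×. Suppose there exists a valuation subring O of K with O^× ⊆ G (the group case). Then: (1) O_G^× ⊆ G; (2) O_G is the unique valuation subring of K that is coarsely compatible with G and has unit group contained in G; and (3) every valuation subring of K that is weakly compatible with G is compatible with G. -/

import Mathlib

set_option linter.unusedVariables false


/-- `O` is compatible with the multiplicative subgroup `G ≤ Kˣ` if `1 + M(O) ⊆ G`. -/
def Compatible {K : Type*} [Field K] (O : ValuationSubring K) (G : Subgroup Kˣ) : Prop :=
  ∀ m : O, m ∈ IsLocalRing.maximalIdeal O → ∃ u ∈ G, (u : K) = 1 + (m : K)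

/-- `O` is weakly compatible with `G` if there is an ideal `A` of `O` with radical the
maximal ideal and `1 + A ⊆ G`. -/
def WeaklyCompatible {K : Type*} [Field K] (O : ValuationSubring K) (G : Subgroup Kˣ) : Prop :=
  ∃ A : Ideal O, A.radical = IsLocalRing.maximalIdeal O ∧ ∀ a ∈ A, ∃ u ∈ G, (u : K) = 1 + (a : K)

/-- `O` is coarsely compatible with `G` if it is weakly compatible with `G` and no valuation
subring properly containing `O` has its unit group contained in `G`. -/
def CoarselyCompatible {K : Type*} [Field K] (O : ValuationSubring K) (G : Subgroup Kˣ) : Prop :=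
  WeaklyCompatible O G ∧ ∀ O' : ValuationSubring K, O < O' → ¬ (O'.unitGroup ≤ G)

namespace GroupCaseAux

variable {K : Type*} [Field K]

lemma nmem_inv {O : ValuationSubring K} {x : K} (h : x ∉ O) : x⁻¹ ∈ O :=
  (O.mem_or_inv_mem x).resolve_left h

lemma nmem_ne_zero {O : ValuationSubring K} {x : K} (h : x ∉ O) : x ≠ 0 :=
  fun h0 => h (h0 ▸ zero_mem _)

lemma inv_nmem_ne_zero {O : ValuationSubring K} {x : K} (h : x⁻¹ ∉ O) : x ≠ 0 := by
  intro h0; apply h; rw [h0, inv_zero]; exact zero_mem _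

lemma inv_nmem_mem {O : ValuationSubring K} {x : K} (h : x⁻¹ ∉ O) : x ∈ O :=
  (O.mem_or_inv_mem x).resolve_right h

lemma mem_unitGroup_iff' (A : ValuationSubring K) (u : Kˣ) :
    u ∈ A.unitGroup ↔ (u : K) ∈ A ∧ ((u : K))⁻¹ ∈ A := by
  rw [ValuationSubring.mem_unitGroup_iff]
  constructor
  · intro h
    exact ⟨A.mem_of_valuation_le_one _ h.le,
      A.mem_of_valuation_le_one _ (by rw [map_inv₀, h, inv_one])⟩
  · rintro ⟨h1, h2⟩
    rw [← A.valuation_le_one_iff] at h1 h2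
    rw [map_inv₀] at h2
    have h0 : A.valuation (u : K) ≠ 0 := by
      simp [Valuation.ne_zero_iff, u.ne_zero]
    exact le_antisymm h1 ((inv_le_one₀ (zero_lt_iff.mpr h0)).mp h2)

lemma isUnitSub_iff (O : ValuationSubring K) (m : O) :
    IsUnit m ↔ ((m : K) ≠ 0 ∧ ((m : K))⁻¹ ∈ O) := by
  constructor
  · intro h
    obtain ⟨u, hu⟩ := h
    have h1 : ((u : O) : K) * (((u⁻¹ : Oˣ) : O) : K) = 1 := by
      have h2 : ((u : O) * ((u⁻¹ : Oˣ) : O) : O) = 1 := by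
        rw [← Units.val_mul, mul_inv_cancel]; rfl
      calc ((u : O) : K) * (((u⁻¹ : Oˣ) : O) : K)
          = (((u : O) * ((u⁻¹ : Oˣ) : O) : O) : K) := by push_cast; ring
        _ = 1 := by rw [h2]; rfl
    rw [hu] at h1
    constructor
    · intro h0; rw [h0, zero_mul] at h1; exact zero_ne_one h1
    · have h3 := eq_inv_of_mul_eq_one_right h1
      rw [← h3]; exact SetLike.coe_mem _
  · rintro ⟨h0, hinv⟩
    exact IsUnit.of_mul_eq_one (a := m) ⟨(m : K)⁻¹, hinv⟩ (Subtype.ext (by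
      push_cast; exact mul_inv_cancel₀ h0))

lemma mem_maxIdeal_iff (O : ValuationSubring K) (m : O) :
    m ∈ IsLocalRing.maximalIdeal O ↔ ((m : K) = 0 ∨ ((m : K))⁻¹ ∉ O) := by
  rw [IsLocalRing.mem_maximalIdeal, mem_nonunits_iff, isUnitSub_iff]
  tauto

/-- membership in G as a subset of K -/
def inG (G : Subgroup Kˣ) (x : K) : Prop := ∃ u ∈ G, (u : K) = x

variable {G : Subgroup Kˣ}

lemma inG_one : inG G 1 := ⟨1, one_mem G, Units.val_one⟩

lemma inG_mul {x y : K} (hx : inG G x) (hy : inG G y) : inG G (x * y) := by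
  obtain ⟨u, hu, hux⟩ := hx; obtain ⟨v, hv, hvy⟩ := hy
  exact ⟨u * v, mul_mem hu hv, by rw [Units.val_mul, hux, hvy]⟩

lemma inG_inv {x : K} (hx : inG G x) : inG G x⁻¹ := by
  obtain ⟨u, hu, hux⟩ := hx
  exact ⟨u⁻¹, inv_mem hu, by rw [← hux]; exact u.val_inv_eq_inv_val⟩

lemma inG_of_mul_eq {a b x : K} (ha : inG G a) (hb : inG G b) (hb0 : b ≠ 0)
    (h : x * b = a) : inG G x := by
  have hx : x = a * b⁻¹ := by rw [← h]; field_simp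
  rw [hx]; exact inG_mul ha (inG_inv hb)

/-- overrings of a fixed valuation subring form a chain -/
lemma chain (O0 W1 W2 : ValuationSubring K) (h1 : O0 ≤ W1) (h2 : O0 ≤ W2) :
    W1 ≤ W2 ∨ W2 ≤ W1 := by
  by_cases h : W1 ≤ W2
  · exact Or.inl h
  · right
    intro z hz
    rw [SetLike.not_le_iff_exists] at h
    obtain ⟨z1, hz1W1, hz1W2⟩ := h
    by_cases hzW1 : z ∈ W1
    · exact hzW1
    · have hz0 : z ≠ 0 := fun h0 => hzW1 (h0 ▸ zero_mem _)
      have hz10 : z1 ≠ 0 := nmem_ne_zero hz1W2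
      rcases O0.mem_or_inv_mem (z1 * z⁻¹) with hc | hc
      · exfalso; apply hz1W2
        have he : z1 = (z1 * z⁻¹) * z := by field_simp
        rw [he]; exact mul_mem (h2 hc) hz
      · rw [mul_inv, inv_inv] at hc
        have he : z = (z1⁻¹ * z) * z1 := by field_simp
        rw [he]; exact mul_mem (h1 hc) hz1W1

/-- the smallest valuation subring containing two given ones -/
def joinV (O O0 : ValuationSubring K) : ValuationSubring K where
  carrier := {x | ∀ W : ValuationSubring K, O ≤ W → O0 ≤ W → x ∈ W}
  zero_mem' := fun W _ _ => zero_mem W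
  one_mem' := fun W _ _ => one_mem W
  add_mem' := fun hx hy W h1 h2 => add_mem (hx W h1 h2) (hy W h1 h2)
  mul_mem' := fun hx hy W h1 h2 => mul_mem (hx W h1 h2) (hy W h1 h2)
  neg_mem' := fun hx W h1 h2 => neg_mem (hx W h1 h2)
  mem_or_inv_mem' := by
    intro x
    by_cases h : ∀ W : ValuationSubring K, O ≤ W → O0 ≤ W → x ∈ W
    · exact Or.inl h
    · right
      push_neg at h
      obtain ⟨W0, hOW0, hO0W0, hx0⟩ := h
      intro W hOW hO0W
      rcases chain O0 W0 W hO0W0 hO0W with hle | hle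
      · exact hle (nmem_inv hx0)
      · exact nmem_inv (fun hx => hx0 (hle hx))

lemma le_joinV_left {O O0 : ValuationSubring K} : O ≤ joinV O O0 :=
  fun _x hx W h1 _h2 => h1 hx

lemma le_joinV_right {O O0 : ValuationSubring K} : O0 ≤ joinV O O0 :=
  fun _x hx W _h1 h2 => h2 hx

lemma joinV_min {O O0 W : ValuationSubring K} (h1 : O ≤ W) (h2 : O0 ≤ W) :
    joinV O O0 ≤ W := fun _x hx => hx W h1 h2

/-- maximal overring of O with unit group contained in G -/
def maxRing (G : Subgroup Kˣ) (O : ValuationSubring K) (hO : O.unitGroup ≤ G) :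
    ValuationSubring K where
  carrier := {x | ∃ W : ValuationSubring K, (O ≤ W ∧ W.unitGroup ≤ G) ∧ x ∈ W}
  zero_mem' := ⟨O, ⟨le_refl _, hO⟩, zero_mem _⟩
  one_mem' := ⟨O, ⟨le_refl _, hO⟩, one_mem _⟩
  add_mem' := by
    rintro a b ⟨W1, hW1, haW1⟩ ⟨W2, hW2, hbW2⟩
    rcases chain O W1 W2 hW1.1 hW2.1 with h | h
    · exact ⟨W2, hW2, add_mem (h haW1) hbW2⟩
    · exact ⟨W1, hW1, add_mem haW1 (h hbW2)⟩
  mul_mem' := by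
    rintro a b ⟨W1, hW1, haW1⟩ ⟨W2, hW2, hbW2⟩
    rcases chain O W1 W2 hW1.1 hW2.1 with h | h
    · exact ⟨W2, hW2, mul_mem (h haW1) hbW2⟩
    · exact ⟨W1, hW1, mul_mem haW1 (h hbW2)⟩
  neg_mem' := by
    rintro a ⟨W1, hW1, haW1⟩
    exact ⟨W1, hW1, neg_mem haW1⟩
  mem_or_inv_mem' := by
    intro x
    rcases O.mem_or_inv_mem x with h | h
    · exact Or.inl ⟨O, ⟨le_refl _, hO⟩, h⟩
    · exact Or.inr ⟨O, ⟨le_refl _, hO⟩, h⟩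

lemma mem_maxRing_iff {G : Subgroup Kˣ} {O : ValuationSubring K} {hO : O.unitGroup ≤ G} {y : K} :
    y ∈ maxRing G O hO ↔ ∃ W : ValuationSubring K, (O ≤ W ∧ W.unitGroup ≤ G) ∧ y ∈ W :=
  Iff.rfl

/-- saturation ring: localization of O0 away from q -/
def satO1 (O0 : ValuationSubring K) (q : Set K) (h1q : (1:K) ∉ q)
    (hqmul : ∀ s1 s2 : K, s1 ∈ O0 → s2 ∈ O0 → s1 ∉ q → s2 ∉ q → s1 * s2 ∉ q) :
    ValuationSubring K where
  carrier := {y | ∃ s : K, (s ∈ O0 ∧ s ∉ q) ∧ y * s ∈ O0}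
  one_mem' := ⟨1, ⟨one_mem _, h1q⟩, by simpa using one_mem O0⟩
  zero_mem' := ⟨1, ⟨one_mem _, h1q⟩, by simpa using zero_mem O0⟩
  add_mem' := by
    rintro a b ⟨s, ⟨hs, hsq⟩, has⟩ ⟨t, ⟨ht, htq⟩, hbt⟩
    refine ⟨s * t, ⟨mul_mem hs ht, hqmul s t hs ht hsq htq⟩, ?_⟩
    have he : (a + b) * (s * t) = (a * s) * t + (b * t) * s := by ring
    rw [he]; exact add_mem (mul_mem has ht) (mul_mem hbt hs)
  mul_mem' := by
    rintro a b ⟨s, ⟨hs, hsq⟩, has⟩ ⟨t, ⟨ht, htq⟩, hbt⟩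
    refine ⟨s * t, ⟨mul_mem hs ht, hqmul s t hs ht hsq htq⟩, ?_⟩
    have he : (a * b) * (s * t) = (a * s) * (b * t) := by ring
    rw [he]; exact mul_mem has hbt
  neg_mem' := by
    rintro a ⟨s, hs, has⟩
    exact ⟨s, hs, by rw [neg_mul]; exact neg_mem has⟩
  mem_or_inv_mem' := by
    intro y
    by_cases h : y ∈ O0
    · exact Or.inl ⟨1, ⟨one_mem _, h1q⟩, by simpa using h⟩
    · exact Or.inr ⟨1, ⟨one_mem _, h1q⟩, by simpa using nmem_inv h⟩

lemma le_satO1 {O0 : ValuationSubring K} {q : Set K} {h1q : (1:K) ∉ q}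
    {hqmul : ∀ s1 s2 : K, s1 ∈ O0 → s2 ∈ O0 → s1 ∉ q → s2 ∉ q → s1 * s2 ∉ q} :
    O0 ≤ satO1 O0 q h1q hqmul :=
  fun y hy => ⟨1, ⟨one_mem _, h1q⟩, by simpa using hy⟩

lemma mem_satO1_iff {O0 : ValuationSubring K} {q : Set K} {h1q : (1:K) ∉ q}
    {hqmul : ∀ s1 s2 : K, s1 ∈ O0 → s2 ∈ O0 → s1 ∉ q → s2 ∉ q → s1 * s2 ∉ q} {y : K} :
    y ∈ satO1 O0 q h1q hqmul ↔ ∃ s : K, (s ∈ O0 ∧ s ∉ q) ∧ y * s ∈ O0 :=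
  Iff.rfl

/-- the ring generated over O0 by an element t with t⁻¹ ∈ O0 -/
def satO2 (O0 : ValuationSubring K) (t : K) (hti : t⁻¹ ∈ O0) : ValuationSubring K where
  carrier := {y | ∃ k : ℕ, y * (t⁻¹) ^ k ∈ O0}
  one_mem' := ⟨0, by simpa using one_mem O0⟩
  zero_mem' := ⟨0, by simpa using zero_mem O0⟩
  add_mem' := by
    rintro a b ⟨k1, h1⟩ ⟨k2, h2⟩
    refine ⟨k1 + k2, ?_⟩
    have he : (a + b) * t⁻¹ ^ (k1 + k2)
        = (a * t⁻¹ ^ k1) * t⁻¹ ^ k2 + (b * t⁻¹ ^ k2) * t⁻¹ ^ k1 := by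
      rw [pow_add]; ring
    rw [he]
    exact add_mem (mul_mem h1 (pow_mem hti _)) (mul_mem h2 (pow_mem hti _))
  mul_mem' := by
    rintro a b ⟨k1, h1⟩ ⟨k2, h2⟩
    refine ⟨k1 + k2, ?_⟩
    have he : (a * b) * t⁻¹ ^ (k1 + k2) = (a * t⁻¹ ^ k1) * (b * t⁻¹ ^ k2) := by
      rw [pow_add]; ring
    rw [he]; exact mul_mem h1 h2
  neg_mem' := by
    rintro a ⟨k, hk⟩
    exact ⟨k, by rw [neg_mul]; exact neg_mem hk⟩
  mem_or_inv_mem' := by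
    intro y
    by_cases h : y ∈ O0
    · exact Or.inl ⟨0, by simpa using h⟩
    · exact Or.inr ⟨0, by simpa using nmem_inv h⟩

lemma le_satO2 {O0 : ValuationSubring K} {t : K} {hti : t⁻¹ ∈ O0} :
    O0 ≤ satO2 O0 t hti := fun y hy => ⟨0, by simpa using hy⟩

lemma mem_satO2_iff {O0 : ValuationSubring K} {t : K} {hti : t⁻¹ ∈ O0} {y : K} :
    y ∈ satO2 O0 t hti ↔ ∃ k : ℕ, y * (t⁻¹) ^ k ∈ O0 :=
  Iff.rfl

lemma Pmul {O : ValuationSubring K} {c z : K} (hc : c ∈ O) (hc0 : c ≠ 0)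
    (hz : z ∈ O) (hzi : z⁻¹ ∉ O) : c * z ∈ O ∧ (c * z)⁻¹ ∉ O := by
  refine ⟨mul_mem hc hz, fun hmem => hzi ?_⟩
  have hz0 : z ≠ 0 := inv_nmem_ne_zero hzi
  have he : z⁻¹ = c * (c * z)⁻¹ := by field_simp
  rw [he]; exact mul_mem hc hmem

lemma Ppow {O : ValuationSubring K} {z : K} (hz : z ∈ O) (hzi : z⁻¹ ∉ O) :
    ∀ m : ℕ, 1 ≤ m → z ^ m ∈ O ∧ (z ^ m)⁻¹ ∉ O := by
  intro m hm
  induction m with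
  | zero => omega
  | succ k ih =>
    by_cases hk : k = 0
    · subst hk; simpa using ⟨hz, hzi⟩
    · obtain ⟨h1, h2⟩ := ih (by omega)
      have hz0 : z ≠ 0 := inv_nmem_ne_zero hzi
      have h3 := Pmul h1 (pow_ne_zero _ hz0) hz hzi
      rwa [← pow_succ] at h3

lemma U1 {O : ValuationSubring K} {z : K} (hz : z ∈ O) (hzi : z⁻¹ ∉ O) :
    (1 + z) ∈ O ∧ (1 + z)⁻¹ ∈ O ∧ (1 + z) ≠ 0 := by
  have hz0 : z ≠ 0 := inv_nmem_ne_zero hzi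
  have hne : (1 : K) + z ≠ 0 := by
    intro h
    apply hzi
    have hz1 : z = -1 := by linear_combination h
    rw [hz1, inv_neg, inv_one]
    exact neg_mem (one_mem _)
  refine ⟨add_mem (one_mem _) hz, ?_, hne⟩
  rcases O.mem_or_inv_mem ((1 + z) * z⁻¹) with h | h
  · exfalso; apply hzi
    have he : z⁻¹ = (1 + z) * z⁻¹ - 1 := by field_simp; ring
    rw [he]; exact sub_mem h (one_mem _)
  · rw [mul_inv, inv_inv] at h
    have h' : z * (1 + z)⁻¹ ∈ O := by rwa [mul_comm] at h
    have he : (1 + z)⁻¹ = 1 - z * (1 + z)⁻¹ := by field_simp; ring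
    rw [he]; exact sub_mem (one_mem _) h'


/-- The main technical lemma. -/
theorem main_lemma (G : Subgroup Kˣ) (O O0 Om : ValuationSubring K) (Aset : Set K)
    (hOOm : O ≤ Om) (hO0Om : O0 ≤ Om)
    (hmin : ∀ W : ValuationSubring K, O ≤ W → O0 ≤ W → Om ≤ W)
    (hA0 : ∀ a ∈ Aset, a ∈ O ∧ (a ≠ 0 → a⁻¹ ∉ O))
    (hAmul : ∀ a ∈ Aset, ∀ c ∈ O, c * a ∈ Aset)
    (hrad : ∀ z : K, z ∈ O → z⁻¹ ∉ O → ∃ m : ℕ, 1 ≤ m ∧ z ^ m ∈ Aset)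
    (hG1A : ∀ a ∈ Aset, inG G (1 + a))
    (hU0 : ∀ y : K, y ≠ 0 → y ∈ O0 → y⁻¹ ∈ O0 → inG G y)
    (ha0 : ∃ a0 ∈ Aset, a0 ≠ 0 ∧ a0⁻¹ ∈ Om) :
    ∀ x : K, x ≠ 0 → x ∈ Om → x⁻¹ ∈ Om → inG G x := by
  suffices H : ∀ x : K, x ≠ 0 → x ∈ Om → x⁻¹ ∈ Om → x ∈ O0 → inG G x by
    intro x hx0 hxOm hxiOm
    rcases O0.mem_or_inv_mem x with h | h
    · exact H x hx0 hxOm hxiOm h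
    · have h2 := H x⁻¹ (inv_ne_zero hx0) hxiOm (by rwa [inv_inv]) h
      have h3 := inG_inv h2
      rwa [inv_inv] at h3
  intro x hx0 hxOm hxiOm hxO0
  by_cases hxiO0 : x⁻¹ ∈ O0
  · exact hU0 x hx0 hxO0 hxiO0
  by_cases hxO : x ∈ O
  case neg =>
    -- Case: x ∉ O.  Then x⁻¹ is a nonunit of O.
    have hxiO : x⁻¹ ∈ O := nmem_inv hxO
    have hxiiO : (x⁻¹)⁻¹ ∉ O := by rwa [inv_inv]
    obtain ⟨m, hm1, hmA⟩ := hrad x⁻¹ hxiO hxiiO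
    have hA2 : (x⁻¹) ^ (m + 1) ∈ Aset := by
      have h := hAmul _ hmA x⁻¹ hxiO
      rwa [← pow_succ'] at h
    have hPm : x ^ m ∈ O0 ∧ (x ^ m)⁻¹ ∉ O0 := Ppow hxO0 hxiO0 m hm1
    have hPm1 : x ^ (m + 1) ∈ O0 ∧ (x ^ (m + 1))⁻¹ ∉ O0 := Ppow hxO0 hxiO0 (m + 1) (by omega)
    obtain ⟨hn2O, hn2i, hn2ne⟩ := U1 hPm.1 hPm.2
    obtain ⟨hn1O, hn1i, hn1ne⟩ := U1 hPm1.1 hPm1.2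
    have hg1ne : (1 + (x⁻¹) ^ (m + 1)) ≠ 0 := by
      intro h
      apply hPm1.2
      have h' : (x ^ (m + 1))⁻¹ = -1 := by
        rw [← inv_pow]; linear_combination h
      rw [h']
      exact neg_mem (one_mem _)
    have hid : x * ((1 + (x⁻¹) ^ (m + 1)) * (1 + x ^ m))
        = (1 + x ^ (m + 1)) * (1 + (x⁻¹) ^ m) := by
      rw [inv_pow, inv_pow]
      field_simp
      ring
    exact inG_of_mul_eq (inG_mul (hU0 _ hn1ne hn1O hn1i) (hG1A _ hmA))
      (inG_mul (hG1A _ hA2) (hU0 _ hn2ne hn2O hn2i))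
      (mul_ne_zero hg1ne hn2ne) hid
  case pos =>
    -- Case: x ∈ O.
    set q : Set K := {y | y ∈ O0 ∧ ∃ n : ℕ, 1 ≤ n ∧ y ^ n * x⁻¹ ∈ O0} with hq
    have h0q : (0 : K) ∈ q := ⟨zero_mem _, 1, le_refl 1, by simpa using zero_mem O0⟩
    have h1q : (1 : K) ∉ q := by
      rintro ⟨-, n, hn, hmem⟩
      rw [one_pow, one_mul] at hmem
      exact hxiO0 hmem
    have hqmul : ∀ s1 s2 : K, s1 ∈ O0 → s2 ∈ O0 → s1 ∉ q → s2 ∉ q → s1 * s2 ∉ q := by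
      intro s1 s2 h1 h2 hn1 hn2 hmem
      obtain ⟨-, n, hn, hqn⟩ := hmem
      have h10 : s1 ≠ 0 := fun h => hn1 (h ▸ h0q)
      have h20 : s2 ≠ 0 := fun h => hn2 (h ▸ h0q)
      rcases O0.mem_or_inv_mem (s1 * s2⁻¹) with hc | hc
      · apply hn1
        refine ⟨h1, 2 * n, by omega, ?_⟩
        have he : s1 ^ (2 * n) * x⁻¹ = (s1 * s2⁻¹) ^ n * ((s1 * s2) ^ n * x⁻¹) := by
          rw [mul_pow, mul_pow, inv_pow]
          field_simp
          ring
        rw [he]; exact mul_mem (pow_mem hc n) hqn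
      · rw [mul_inv, inv_inv] at hc
        apply hn2
        refine ⟨h2, 2 * n, by omega, ?_⟩
        have he : s2 ^ (2 * n) * x⁻¹ = (s1⁻¹ * s2) ^ n * ((s1 * s2) ^ n * x⁻¹) := by
          rw [mul_pow, mul_pow, inv_pow]
          field_simp
          ring
        rw [he]; exact mul_mem (pow_mem hc n) hqn
    set O1 : ValuationSubring K := satO1 O0 q h1q hqmul with hO1def
    have hO0O1 : O0 ≤ O1 := le_satO1
    have hOnle : ¬ O ≤ O1 := by
      intro hle
      have hOmle : Om ≤ O1 := hmin O1 hle hO0O1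
      obtain ⟨s, ⟨hs, hsq⟩, hxs⟩ := mem_satO1_iff.mp (hOmle hxiOm)
      refine hsq ⟨hs, 2, by omega, ?_⟩
      have he : s ^ 2 * x⁻¹ = s * (x⁻¹ * s) := by ring
      rw [he]; exact mul_mem hs hxs
    rw [SetLike.not_le_iff_exists] at hOnle
    obtain ⟨t, htO, htO1⟩ := hOnle
    have hpack : ∀ t' : K, t' ∈ O → t' ∉ O1 →
        t' ∉ O0 ∧ t'⁻¹ ∈ O0 ∧ t' ≠ 0 ∧ ∃ n : ℕ, 1 ≤ n ∧ (t'⁻¹) ^ n * x⁻¹ ∈ O0 := by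
      intro t' ht'O ht'O1
      have ht'O0 : t' ∉ O0 := fun h => ht'O1 (hO0O1 h)
      have ht'i : t'⁻¹ ∈ O0 := nmem_inv ht'O0
      have ht'0 : t' ≠ 0 := nmem_ne_zero ht'O0
      have htiq : t'⁻¹ ∈ q := by
        by_contra hniq
        exact ht'O1 (mem_satO1_iff.mpr
          ⟨t'⁻¹, ⟨ht'i, hniq⟩, by rw [mul_inv_cancel₀ ht'0]; exact one_mem _⟩)
      obtain ⟨-, n, hn1, hnq⟩ := htiq
      exact ⟨ht'O0, ht'i, ht'0, n, hn1, hnq⟩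
    by_cases h6 : ∃ t' : K, (t' ∈ O ∧ t' ∉ O1) ∧ t'⁻¹ ∉ O
    · -- easy subcase: a witness which is a nonunit of O
      obtain ⟨t', ⟨ht'O, ht'O1⟩, ht'inv⟩ := h6
      obtain ⟨ht'O0, ht'i, ht'0, n, hn1, hnq⟩ := hpack t' ht'O ht'O1
      obtain ⟨m0, hm01, hm0A⟩ := hrad t' ht'O ht'inv
      obtain ⟨m0', rfl⟩ : ∃ m0' : ℕ, m0 = m0' + 1 := ⟨m0 - 1, by omega⟩
      have hNA : t' ^ ((m0' + 1) * (n + 1)) ∈ Aset := by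
        have h := hAmul _ hm0A (t' ^ ((m0' + 1) * n)) (pow_mem ht'O _)
        rwa [← pow_add, show (m0' + 1) * n + (m0' + 1) = (m0' + 1) * (n + 1) by ring] at h
      have hd0 : t' ^ ((m0' + 1) * (n + 1)) ≠ (0:K) := pow_ne_zero _ ht'0
      have ht'ii : (t'⁻¹)⁻¹ ∉ O0 := by rwa [inv_inv]
      have hNpos : 1 ≤ (m0' + 1) * (n + 1) :=
        Nat.one_le_iff_ne_zero.mpr (Nat.mul_ne_zero (Nat.succ_ne_zero _) (Nat.succ_ne_zero _))
      have hPdinv : (t' ^ ((m0' + 1) * (n + 1)))⁻¹ ∈ O0 ∧ ((t' ^ ((m0' + 1) * (n + 1)))⁻¹)⁻¹ ∉ O0 := by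
        have h := Ppow ht'i ht'ii ((m0' + 1) * (n + 1)) hNpos
        rwa [inv_pow] at h
      have hkey : (t' ^ ((m0' + 1) * (n + 1)))⁻¹ * x⁻¹ ∈ O0 ∧
          ((t' ^ ((m0' + 1) * (n + 1)))⁻¹ * x⁻¹)⁻¹ ∉ O0 := by
        have hdecomp : (t' ^ ((m0' + 1) * (n + 1)))⁻¹ * x⁻¹
            = ((t'⁻¹) ^ ((n + 1) * m0') * ((t'⁻¹) ^ n * x⁻¹)) * t'⁻¹ := by
          rw [← inv_pow, show (m0' + 1) * (n + 1) = (n + 1) * m0' + n + 1 by ring,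
            pow_add, pow_add, pow_one]
          ring
        have hc1 : (t'⁻¹) ^ ((n + 1) * m0') * ((t'⁻¹) ^ n * x⁻¹) ∈ O0 :=
          mul_mem (pow_mem ht'i _) hnq
        have hc10 : (t'⁻¹) ^ ((n + 1) * m0') * ((t'⁻¹) ^ n * x⁻¹) ≠ 0 :=
          mul_ne_zero (pow_ne_zero _ (inv_ne_zero ht'0))
            (mul_ne_zero (pow_ne_zero _ (inv_ne_zero ht'0)) (inv_ne_zero hx0))
        have h := Pmul hc1 hc10 ht'i ht'ii
        rwa [← hdecomp] at h
      obtain ⟨hu1O, hu1i, hu1ne⟩ := U1 hPdinv.1 hPdinv.2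
      obtain ⟨hu2O, hu2i, hu2ne⟩ := U1 hkey.1 hkey.2
      have hxdA : x * t' ^ ((m0' + 1) * (n + 1)) ∈ Aset := hAmul _ hNA x hxO
      have hbne : (1 + t' ^ ((m0' + 1) * (n + 1))) ≠ 0 := by
        intro h
        have hdO0 : t' ^ ((m0' + 1) * (n + 1)) ∉ O0 := by
          have h2 := hPdinv.2; rwa [inv_inv] at h2
        apply hdO0
        have hd1 : t' ^ ((m0' + 1) * (n + 1)) = -1 := by linear_combination h
        rw [hd1]; exact neg_mem (one_mem _)
      have hid : x * ((1 + t' ^ ((m0' + 1) * (n + 1)))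
            * (1 + (t' ^ ((m0' + 1) * (n + 1)))⁻¹ * x⁻¹))
          = (1 + x * t' ^ ((m0' + 1) * (n + 1))) * (1 + (t' ^ ((m0' + 1) * (n + 1)))⁻¹) := by
        field_simp
        ring
      exact inG_of_mul_eq (inG_mul (hG1A _ hxdA) (hU0 _ hu1ne hu1O hu1i))
        (inG_mul (hG1A _ hNA) (hU0 _ hu2ne hu2O hu2i))
        (mul_ne_zero hbne hu2ne) hid
    · -- hard subcase: every witness is a unit of O
      exfalso
      push_neg at h6
      obtain ⟨htO0, hti, ht0, n, hn1, hnq⟩ := hpack t htO htO1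
      have hKey : ∀ a : K, a ∈ O → a⁻¹ ∉ O → ∀ k : ℕ,
          a * t ^ k ∈ O0 ∧ (a * t ^ k)⁻¹ ∉ O0 := by
        intro a haO hai k
        have ha0' : a ≠ 0 := inv_nmem_ne_zero hai
        have hbO : a * t ^ (k + n) ∈ O := mul_mem haO (pow_mem htO _)
        have hbinv : (a * t ^ (k + n))⁻¹ ∉ O := by
          intro hmem; apply hai
          have he : a⁻¹ = t ^ (k + n) * (a * t ^ (k + n))⁻¹ := by
            field_simp
          rw [he]; exact mul_mem (pow_mem htO _) hmem
        have hbO1 : a * t ^ (k + n) ∈ O1 := by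
          by_contra hb
          exact hbinv (h6 _ ⟨hbO, hb⟩)
        obtain ⟨s, ⟨hs, hsq⟩, hbs⟩ := mem_satO1_iff.mp hbO1
        have hs0 : s ≠ 0 := fun h => hsq (h ▸ h0q)
        have hsx : s * x⁻¹ ∉ O0 := by
          intro hmem
          exact hsq ⟨hs, 1, le_refl 1, by simpa using hmem⟩
        have hsxi : (s * x⁻¹)⁻¹ ∈ O0 := nmem_inv hsx
        have hsxii : ((s * x⁻¹)⁻¹)⁻¹ ∉ O0 := by rwa [inv_inv]
        have heq : a * t ^ k
            = ((a * t ^ (k + n) * s) * ((t⁻¹) ^ n * x⁻¹)) * (s * x⁻¹)⁻¹ := by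
          rw [mul_inv, inv_inv, inv_pow, pow_add]
          field_simp
        have hc1 : (a * t ^ (k + n) * s) * ((t⁻¹) ^ n * x⁻¹) ∈ O0 := mul_mem hbs hnq
        have hc10 : (a * t ^ (k + n) * s) * ((t⁻¹) ^ n * x⁻¹) ≠ 0 := by
          apply mul_ne_zero
          · exact mul_ne_zero (mul_ne_zero ha0' (pow_ne_zero _ ht0)) hs0
          · exact mul_ne_zero (pow_ne_zero _ (inv_ne_zero ht0)) (inv_ne_zero hx0)
        have h := Pmul hc1 hc10 hsxi hsxii
        rwa [← heq] at h
      -- O2 := ring generated by O0 and t; show O2 ≤ O, contradiction with a0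
      have hO2O : satO2 O0 t hti ≤ O := by
        intro z hz
        by_contra hzO
        obtain ⟨k, hk⟩ := hz
        have hziO : z⁻¹ ∈ O := nmem_inv hzO
        have hzii : (z⁻¹)⁻¹ ∉ O := by rwa [inv_inv]
        have h := (hKey z⁻¹ hziO hzii k).2
        apply h
        have he : (z⁻¹ * t ^ k)⁻¹ = z * (t⁻¹) ^ k := by
          rw [mul_inv, inv_inv, inv_pow]
        rw [he]; exact hk
      have hOmO : Om ≤ O := hmin O (le_refl O) (le_trans le_satO2 hO2O)
      obtain ⟨a0, ha0A, ha00, ha0i⟩ := ha0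
      exact (hA0 a0 ha0A).2 ha00 (hOmO ha0i)


lemma weakly_setup (G : Subgroup Kˣ) (O' : ValuationSubring K)
    (h : WeaklyCompatible O' G) :
    ∃ Aset : Set K,
      (∀ a ∈ Aset, a ∈ O' ∧ (a ≠ 0 → a⁻¹ ∉ O')) ∧
      (∀ a ∈ Aset, ∀ c ∈ O', c * a ∈ Aset) ∧
      (∀ z : K, z ∈ O' → z⁻¹ ∉ O' → ∃ m : ℕ, 1 ≤ m ∧ z ^ m ∈ Aset) ∧
      (∀ a ∈ Aset, inG G (1 + a)) := by
  obtain ⟨A, hArad, hA1⟩ := h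
  refine ⟨{z : K | ∃ hz : z ∈ O', (⟨z, hz⟩ : O') ∈ A}, ?_, ?_, ?_, ?_⟩
  · rintro a ⟨ha, hmem⟩
    refine ⟨ha, fun h0 hinv => ?_⟩
    have hm : (⟨a, ha⟩ : O') ∈ IsLocalRing.maximalIdeal O' := by
      rw [← hArad]; exact Ideal.le_radical hmem
    rcases (mem_maxIdeal_iff O' _).mp hm with h' | h'
    · exact h0 h'
    · exact h' hinv
  · rintro a ⟨ha, hmem⟩ c hc
    refine ⟨mul_mem hc ha, ?_⟩
    have he : (⟨c * a, mul_mem hc ha⟩ : O') = ⟨c, hc⟩ * ⟨a, ha⟩ := rfl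
    rw [he]; exact Ideal.mul_mem_left A _ hmem
  · intro z hz hzi
    have hm : (⟨z, hz⟩ : O') ∈ IsLocalRing.maximalIdeal O' :=
      (mem_maxIdeal_iff O' _).mpr (Or.inr hzi)
    rw [← hArad] at hm
    obtain ⟨n, hn⟩ := Ideal.mem_radical_iff.mp hm
    rcases Nat.eq_zero_or_pos n with rfl | hpos
    · exfalso
      rw [pow_zero] at hn
      have h1 : (⟨(1:K), one_mem O'⟩ : O') ∈ IsLocalRing.maximalIdeal O' := by
        rw [← hArad]; exact Ideal.le_radical hn
      rcases (mem_maxIdeal_iff O' _).mp h1 with h' | h'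
      · exact one_ne_zero h'
      · rw [show ((⟨(1:K), one_mem O'⟩ : O') : K) = (1:K) from rfl, inv_one] at h'
        exact h' (one_mem _)
    · refine ⟨n, hpos, pow_mem hz n, ?_⟩
      have he : (⟨z ^ n, pow_mem hz n⟩ : O') = (⟨z, hz⟩ : O') ^ n := by
        apply Subtype.ext
        push_cast
        rfl
      rw [he]; exact hn
  · rintro a ⟨ha, hmem⟩
    exact hA1 _ hmem

lemma key_dichotomy (G : Subgroup Kˣ) (M O' : ValuationSubring K)
    (hMunits : ∀ y : K, y ≠ 0 → y ∈ M → y⁻¹ ∈ M → inG G y)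
    (hw : WeaklyCompatible O' G) :
    O' = joinV O' M ∨ (∀ y : K, y ≠ 0 → y ∈ joinV O' M → y⁻¹ ∈ joinV O' M → inG G y) := by
  obtain ⟨Aset, hA0, hAmul, hrad, hG1A⟩ := weakly_setup G O' hw
  by_cases hc : ∃ a0 ∈ Aset, a0 ≠ 0 ∧ a0⁻¹ ∈ joinV O' M
  · exact Or.inr (main_lemma G O' M (joinV O' M) Aset le_joinV_left le_joinV_right
      (fun W h1 h2 => joinV_min h1 h2) hA0 hAmul hrad hG1A hMunits hc)
  · left
    push_neg at hc
    refine le_antisymm le_joinV_left ?_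
    intro y hyW
    by_contra hyO'
    have hy0 : y ≠ 0 := nmem_ne_zero hyO'
    have hyi : y⁻¹ ∈ O' := nmem_inv hyO'
    have hyii : (y⁻¹)⁻¹ ∉ O' := by rwa [inv_inv]
    obtain ⟨m, hm1, hmA⟩ := hrad y⁻¹ hyi hyii
    have h2 := hc _ hmA (pow_ne_zero _ (inv_ne_zero hy0))
    apply h2
    rw [inv_pow, inv_inv]
    exact pow_mem hyW m

end GroupCaseAux


open GroupCaseAux in
theorem group_case_OG
    {K : Type*} [Field K] (G : Subgroup Kˣ)
    (hgroup : ∃ O : ValuationSubring K, O.unitGroup ≤ G)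
    (R : ValuationSubring K)
    (hR : (R : Set K) = ⋂ O ∈ {O : ValuationSubring K | CoarselyCompatible O G}, (O : Set K)) :
    R.unitGroup ≤ G ∧
    (CoarselyCompatible R G ∧
      ∀ O' : ValuationSubring K, CoarselyCompatible O' G → O'.unitGroup ≤ G → O' = R) ∧
    (∀ O' : ValuationSubring K, WeaklyCompatible O' G → Compatible O' G) := by
  classical
  obtain ⟨Og, hOg⟩ := hgroup
  set M : ValuationSubring K := maxRing G Og hOg with hMdef
  have hOgM : Og ≤ M := fun y hy => ⟨Og, ⟨le_refl _, hOg⟩, hy⟩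
  have hMunits : ∀ y : K, y ≠ 0 → y ∈ M → y⁻¹ ∈ M → inG G y := by
    intro y hy0 hyM hyiM
    obtain ⟨W1, hW1, hyW1⟩ := hyM
    obtain ⟨W2, hW2, hyW2⟩ := hyiM
    rcases chain Og W1 W2 hW1.1 hW2.1 with h | h
    · have h1 : Units.mk0 y hy0 ∈ W2.unitGroup := (mem_unitGroup_iff' W2 _).mpr ⟨h hyW1, hyW2⟩
      exact ⟨_, hW2.2 h1, rfl⟩
    · have h1 : Units.mk0 y hy0 ∈ W1.unitGroup := (mem_unitGroup_iff' W1 _).mpr ⟨hyW1, h hyW2⟩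
      exact ⟨_, hW1.2 h1, rfl⟩
  have hMG : M.unitGroup ≤ G := by
    intro u hu
    rw [mem_unitGroup_iff'] at hu
    obtain ⟨g, hg, hge⟩ := hMunits (u : K) u.ne_zero hu.1 hu.2
    have hgu : g = u := Units.ext hge
    rwa [← hgu]
  have hMweak : WeaklyCompatible M G := by
    refine ⟨IsLocalRing.maximalIdeal M,
      Ideal.IsPrime.radical (Ideal.IsMaximal.isPrime (IsLocalRing.maximalIdeal.isMaximal _)), ?_⟩
    intro m hm
    rcases (mem_maxIdeal_iff M m).mp hm with h0 | hP
    · exact ⟨1, one_mem G, by rw [h0, add_zero, Units.val_one]⟩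
    · obtain ⟨h1, h2, h3⟩ := U1 (SetLike.coe_mem m) hP
      exact hMunits _ h3 h1 h2
  have hMcoarse : CoarselyCompatible M G := by
    refine ⟨hMweak, ?_⟩
    intro W hMW hWG
    have hle : W ≤ M := fun y hy => ⟨W, ⟨le_trans hOgM (le_of_lt hMW), hWG⟩, hy⟩
    exact absurd (lt_of_lt_of_le hMW hle) (lt_irrefl M)
  have hC1 : ∀ O' : ValuationSubring K, CoarselyCompatible O' G → M ≤ O' := by
    intro O' hcc
    obtain ⟨hw, hcmax⟩ := hcc
    rcases key_dichotomy G M O' hMunits hw with heq | hun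
    · rw [heq]; exact le_joinV_right
    · have hWG : (joinV O' M).unitGroup ≤ G := by
        intro u hu
        rw [mem_unitGroup_iff'] at hu
        obtain ⟨g, hg, hge⟩ := hun (u : K) u.ne_zero hu.1 hu.2
        have hgu : g = u := Units.ext hge
        rwa [← hgu]
      have heq : O' = joinV O' M := by
        by_contra hne
        exact hcmax _ (lt_of_le_of_ne le_joinV_left hne) hWG
      rw [heq]; exact le_joinV_right
  have hRM : R = M := by
    apply SetLike.coe_injective
    rw [hR]
    apply Set.Subset.antisymm
    · exact Set.biInter_subset_of_mem hMcoarse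
    · intro y hy
      exact Set.mem_biInter (fun O' hO' => hC1 O' hO' hy)
  refine ⟨?_, ⟨?_, ?_⟩, ?_⟩
  · rw [hRM]; exact hMG
  · rw [hRM]; exact hMcoarse
  · intro O' hcc hO'G
    have h1 : M ≤ O' := hC1 O' hcc
    rw [hRM]
    by_contra hne
    exact hMcoarse.2 O' (lt_of_le_of_ne h1 (fun h => hne h.symm)) hO'G
  · intro O' hw
    intro m hm
    rcases (mem_maxIdeal_iff O' m).mp hm with h0 | hP
    · exact ⟨1, one_mem G, by rw [h0, add_zero, Units.val_one]⟩
    · obtain ⟨h1, h2, h3⟩ := U1 (SetLike.coe_mem m) hP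
      rcases key_dichotomy G M O' hMunits hw with heq | hun
      · have hMO' : M ≤ O' := by rw [heq]; exact le_joinV_right
        have hmM : (m : K) ∈ M := by
          by_contra hmm
          exact hP (hMO' (nmem_inv hmm))
        have hmiM : ((m : K))⁻¹ ∉ M := fun h => hP (hMO' h)
        obtain ⟨g1, g2, g3⟩ := U1 hmM hmiM
        exact hMunits _ g3 g1 g2
      · exact hun _ h3 (le_joinV_left h1) (le_joinV_left h2)
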